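/- Let V be a finite-dimensional real vector space, D ⊆ V × V* a Lagrangian subspace with respect to the pairing ⟨(u,α),(v,β)⟩ = β(u) + α(v), and R ⊆ V a subspace. Then (D ∩ (R × V*))^⊥ = D + ({0} × R°), where R° is the annihilator of R in V*. -/

import Mathlib

open Module

/-- The Pontryagin pairing `⟨(u,α),(v,β)⟩ = β(u) + α(v)` on `V × V*`. -/
noncomputable def pontryaginPair (V : Type*) [AddCommGroup V] [Module ℝ V] :
    LinearMap.BilinForm ℝ (V × Module.Dual ℝ V) :=
  LinearMap.mk₂ ℝ (fun p q => q.2 p.1 + p.2 q.1)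
    (by intro p p' q; simp; ring)
    (by intro c p q; simp; ring)
    (by intro p q q'; simp; ring)
    (by intro c p q; simp; ring)

lemma pontryaginPair_apply {V : Type*} [AddCommGroup V] [Module ℝ V]
    (p q : V × Module.Dual ℝ V) : pontryaginPair V p q = q.2 p.1 + p.2 q.1 := rfl

lemma pontryaginPair_isRefl (V : Type*) [AddCommGroup V] [Module ℝ V] :
    (pontryaginPair V).IsRefl := by
  intro p q h
  simp only [pontryaginPair_apply] at *
  linarith

lemma pontryaginPair_nondegenerate (V : Type*) [AddCommGroup V] [Module ℝ V] :
    (pontryaginPair V).Nondegenerate := by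
  refine (LinearMap.IsRefl.nondegenerate_iff_separatingLeft (pontryaginPair_isRefl V)).mpr ?_
  intro p hp
  have h1 : p.1 = 0 := by
    rw [← Module.forall_dual_apply_eq_zero_iff ℝ p.1]
    intro φ
    have := hp (0, φ)
    simpa [pontryaginPair_apply] using this
  have h2 : p.2 = 0 := by
    ext v
    have := hp (v, 0)
    simpa [pontryaginPair_apply] using this
  exact Prod.ext h1 h2

lemma orthogonal_sup {K M : Type*} [Field K] [AddCommGroup M] [Module K M]
    (B : LinearMap.BilinForm K M) (A C : Submodule K M) :
    B.orthogonal (A ⊔ C) = B.orthogonal A ⊓ B.orthogonal C := by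
  apply le_antisymm
  · exact le_inf (B.orthogonal_le le_sup_left) (B.orthogonal_le le_sup_right)
  · rintro x ⟨hA, hC⟩ n hn
    obtain ⟨a, ha, c, hc, rfl⟩ := Submodule.mem_sup.mp hn
    have h1 := hA a ha
    have h2 := hC c hc
    rw [map_add, LinearMap.add_apply, h1, h2, add_zero]

lemma orthogonal_prod {V : Type*} [AddCommGroup V] [Module ℝ V] [FiniteDimensional ℝ V]
    (R : Submodule ℝ V) :
    LinearMap.BilinForm.orthogonal (pontryaginPair V)
        (R.prod (⊤ : Submodule ℝ (Module.Dual ℝ V)))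
      = (⊥ : Submodule ℝ V).prod R.dualAnnihilator := by
  ext p
  simp only [LinearMap.BilinForm.mem_orthogonal_iff, Submodule.mem_prod, Submodule.mem_top,
    Submodule.mem_bot, Submodule.mem_dualAnnihilator, LinearMap.BilinForm.IsOrtho,
    pontryaginPair_apply]
  constructor
  · intro h
    have h1 : p.1 = 0 := by
      rw [← Module.forall_dual_apply_eq_zero_iff ℝ p.1]
      intro φ
      have := h (0, φ) ⟨R.zero_mem, trivial⟩
      simpa using this
    refine ⟨h1, fun u hu => ?_⟩
    have := h (u, 0) ⟨hu, trivial⟩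
    simpa using this
  · rintro ⟨h1, h2⟩ n ⟨hn, -⟩
    simp [h1, h2 n.1 hn]

/-- If `D` is Lagrangian and `R ⊆ V` a subspace, then
`(D ∩ (R × V*))^⊥ = D + ({0} × R°)`. -/
theorem orthogonal_inf_prod_top {V : Type*} [AddCommGroup V] [Module ℝ V]
    [FiniteDimensional ℝ V] (D : Submodule ℝ (V × Module.Dual ℝ V))
    (hD : LinearMap.BilinForm.orthogonal (pontryaginPair V) D = D) (R : Submodule ℝ V) :
    LinearMap.BilinForm.orthogonal (pontryaginPair V)
        (D ⊓ R.prod (⊤ : Submodule ℝ (Module.Dual ℝ V)))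
      = D ⊔ (⊥ : Submodule ℝ V).prod R.dualAnnihilator := by
  have hnd := pontryaginPair_nondegenerate V
  have hrefl := pontryaginPair_isRefl V
  have key : D ⊓ R.prod (⊤ : Submodule ℝ (Module.Dual ℝ V))
      = LinearMap.BilinForm.orthogonal (pontryaginPair V)
          (D ⊔ (⊥ : Submodule ℝ V).prod R.dualAnnihilator) := by
    rw [orthogonal_sup, hD, ← orthogonal_prod R,
      LinearMap.BilinForm.orthogonal_orthogonal hnd hrefl]
  rw [key, LinearMap.BilinForm.orthogonal_orthogonal hnd hrefl]
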